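/- The graphs A6 and its complement are the only graphs U such that both U and its complement are claw-free and U contains a triangle and a 3-element independent set having no vertex in common; that is, if U ∈ Forb{K_{1,3}, complement of K_{1,3}} contains a triangle and a 3-element independent set that are vertex-disjoint, then U is isomorphic to A6 or to the complement of A6. -/

import Mathlib

open SimpleGraph

/-- The claw `K_{1,3}`: vertex 0 joined to each of the pairwise
    nonadjacent vertices 1, 2, 3. -/
def claw : SimpleGraph (Fin 4) := SimpleGraph.fromRel (fun a _ => a = 0)

/-- A graph is claw-free if it has no induced subgraph isomorphic to `K_{1,3}`. -/
def ClawFree {V : Type*} (G : SimpleGraph V) : Prop := IsEmpty (claw ↪g G)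

/-- The graph `A6`: a triangle 0,1,2 (= a,b,c) together with pairwise nonadjacent
    vertices 3,4,5 (= a',b',c'), where 3 is adjacent exactly to 1,2; 4 exactly
    to 0,2; and 5 exactly to 0,1. -/
def A6 : SimpleGraph (Fin 6) := SimpleGraph.fromRel (fun a b =>
  (a = 0 ∧ b = 1) ∨ (a = 0 ∧ b = 2) ∨ (a = 1 ∧ b = 2) ∨
  (a = 3 ∧ b = 1) ∨ (a = 3 ∧ b = 2) ∨ (a = 4 ∧ b = 0) ∨ (a = 4 ∧ b = 2) ∨
  (a = 5 ∧ b = 0) ∨ (a = 5 ∧ b = 1))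

instance instDecFromRel {n} (r : Fin n → Fin n → Prop) [DecidableRel r] :
    DecidableRel (SimpleGraph.fromRel r).Adj :=
  fun i j => decidable_of_iff _ (SimpleGraph.fromRel_adj r i j).symm

instance instDecCompl {W : Type*} [DecidableEq W] (G : SimpleGraph W) [DecidableRel G.Adj] :
    DecidableRel Gᶜ.Adj :=
  fun i j => decidable_of_iff _ (SimpleGraph.compl_adj G i j).symm

instance : DecidableRel claw.Adj := by unfold claw; infer_instance
instance : DecidableRel A6.Adj := by unfold A6; infer_instance

/-! ### Claw patterns -/

def HasClaw {W : Type*} (G : SimpleGraph W) : Prop :=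
  ∃ x p q r : W, G.Adj x p ∧ G.Adj x q ∧ G.Adj x r ∧ p ≠ q ∧ p ≠ r ∧ q ≠ r ∧
    ¬G.Adj p q ∧ ¬G.Adj p r ∧ ¬G.Adj q r

lemma hasClaw_iff_not_clawFree {W : Type*} (G : SimpleGraph W) :
    HasClaw G ↔ ¬ ClawFree G := by
  constructor
  · rintro ⟨x, p, q, r, h1, h2, h3, d1, d2, d3, n1, n2, n3⟩ ⟨hempty⟩
    refine hempty ⟨⟨![x, p, q, r], ?_⟩, ?_⟩
    · intro i j hij
      fin_cases i <;> fin_cases j <;>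
        simp_all [h1.ne, h2.ne, h3.ne, h1.ne', h2.ne', h3.ne']
    · have m1 : ¬G.Adj q p := fun h => n1 (G.adj_symm h)
      have m2 : ¬G.Adj r p := fun h => n2 (G.adj_symm h)
      have m3 : ¬G.Adj r q := fun h => n3 (G.adj_symm h)
      intro i j
      fin_cases i <;> fin_cases j <;>
        simp [claw, h1, h2, h3, h1.symm, h2.symm, h3.symm, d1, d2, d3, d1.symm, d2.symm, d3.symm,
          n1, n2, n3, m1, m2, m3] <;> first | exact h1 | exact h2 | exact h3 | exact h1.symm | exact h2.symm | exact h3.symm | exact n1 | exact n2 | exact n3 | exact m1 | exact m2 | exact m3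
  · intro hcf
    rcases not_isEmpty_iff.1 hcf with ⟨f⟩
    refine ⟨f 0, f 1, f 2, f 3, ?_, ?_, ?_, ?_, ?_, ?_, ?_, ?_, ?_⟩
    · exact f.map_rel_iff.2 (by decide)
    · exact f.map_rel_iff.2 (by decide)
    · exact f.map_rel_iff.2 (by decide)
    · exact fun h => absurd (f.injective h) (by decide)
    · exact fun h => absurd (f.injective h) (by decide)
    · exact fun h => absurd (f.injective h) (by decide)
    · exact fun h => absurd (f.map_rel_iff.1 h) (by decide)
    · exact fun h => absurd (f.map_rel_iff.1 h) (by decide)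
    · exact fun h => absurd (f.map_rel_iff.1 h) (by decide)

/-! ### Boolean search for claws -/

def hasClawB (f : ℕ → ℕ → Bool) (n : ℕ) : Bool :=
  (List.range n).any fun x => (List.range n).any fun p => f x p &&
    ((List.range n).any fun q => decide (p < q) && f x q && !f p q &&
      ((List.range n).any fun r => decide (q < r) && f x r && !f p r && !f q r))

lemma hasClawB_of_ordered {n : ℕ} (f : ℕ → ℕ → Bool) (G : SimpleGraph (Fin n))
    (h : ∀ i j : Fin n, G.Adj i j ↔ f i.val j.val = true)
    (x p q r : Fin n) (hpq : p < q) (hqr : q < r)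
    (h1 : G.Adj x p) (h2 : G.Adj x q) (h3 : G.Adj x r)
    (n1 : ¬G.Adj p q) (n2 : ¬G.Adj p r) (n3 : ¬G.Adj q r) :
    hasClawB f n = true := by
  simp only [hasClawB, List.any_eq_true, List.mem_range, Bool.and_eq_true, Bool.not_eq_true',
    decide_eq_true_iff]
  refine ⟨x, x.isLt, p, p.isLt, (h _ _).1 h1, q, q.isLt, ⟨⟨hpq, (h _ _).1 h2⟩, ?_⟩,
    r, r.isLt, ⟨⟨⟨hqr, (h _ _).1 h3⟩, ?_⟩, ?_⟩⟩
  · exact Bool.not_eq_true _ ▸ (fun hc => n1 ((h p q).2 hc))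
  · exact Bool.not_eq_true _ ▸ (fun hc => n2 ((h p r).2 hc))
  · exact Bool.not_eq_true _ ▸ (fun hc => n3 ((h q r).2 hc))

lemma hasClawB_iff {n : ℕ} (f : ℕ → ℕ → Bool) (G : SimpleGraph (Fin n))
    (h : ∀ i j : Fin n, G.Adj i j ↔ f i.val j.val = true) :
    HasClaw G ↔ hasClawB f n = true := by
  constructor
  · rintro ⟨x, p, q, r, h1, h2, h3, d1, d2, d3, n1, n2, n3⟩
    have sym : ∀ a b : Fin n, ¬G.Adj a b → ¬G.Adj b a := fun a b hab hc => hab hc.symm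
    rcases lt_trichotomy p q with hpq | hpq | hpq
    · rcases lt_trichotomy q r with hqr | hqr | hqr
      · exact hasClawB_of_ordered f G h x p q r hpq hqr h1 h2 h3 n1 n2 n3
      · exact absurd hqr d3
      · rcases lt_trichotomy p r with hpr | hpr | hpr
        · exact hasClawB_of_ordered f G h x p r q hpr hqr h1 h3 h2 n2 n1 (sym _ _ n3)
        · exact absurd hpr d2
        · exact hasClawB_of_ordered f G h x r p q hpr hpq h3 h1 h2 (sym _ _ n2) (sym _ _ n3) n1
    · exact absurd hpq d1
    · rcases lt_trichotomy p r with hpr | hpr | hpr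
      · exact hasClawB_of_ordered f G h x q p r hpq hpr h2 h1 h3 (sym _ _ n1) n3 n2
      · exact absurd hpr d2
      · rcases lt_trichotomy q r with hqr | hqr | hqr
        · exact hasClawB_of_ordered f G h x q r p hqr hpr h2 h3 h1 n3 (sym _ _ n1) (sym _ _ n2)
        · exact absurd hqr d3
        · exact hasClawB_of_ordered f G h x r q p hqr hpq h3 h2 h1 (sym _ _ n3) (sym _ _ n2)
            (sym _ _ n1)
  · intro hb
    simp only [hasClawB, List.any_eq_true, List.mem_range, Bool.and_eq_true, Bool.not_eq_true',
      decide_eq_true_iff] at hb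
    obtain ⟨x, hx, p, hp, fxp, q, hq, ⟨⟨hpq, fxq⟩, fpq⟩, r, hr, ⟨⟨⟨hqr, fxr⟩, fpr⟩, fqr⟩⟩ := hb
    refine ⟨⟨x, hx⟩, ⟨p, hp⟩, ⟨q, hq⟩, ⟨r, hr⟩, (h _ _).2 fxp, (h _ _).2 fxq, (h _ _).2 fxr,
      ?_, ?_, ?_, ?_, ?_, ?_⟩
    · exact fun hc => absurd (Fin.val_eq_of_eq hc) hpq.ne
    · exact fun hc => absurd (Fin.val_eq_of_eq hc) (hpq.trans hqr).ne
    · exact fun hc => absurd (Fin.val_eq_of_eq hc) hqr.ne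
    · exact fun hc => by simp [(h _ _).1 hc] at fpq
    · exact fun hc => by simp [(h _ _).1 hc] at fpr
    · exact fun hc => by simp [(h _ _).1 hc] at fqr

/-! ### Concrete graphs from boolean adjacency data -/

def badj (B : ℕ → ℕ → Bool) (i j : ℕ) : Bool :=
  (decide (i < 3) && decide (j < 3)) ||
  (decide (i < 3) && decide (3 ≤ j) && decide (j < 6) && B i (j-3))

def mk9 (b0 b1 b2 b3 b4 b5 b6 b7 b8 : Bool) : ℕ → ℕ → Bool := fun i j =>
  if i = 0 then (if j = 0 then b0 else if j = 1 then b1 else b2)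
  else if i = 1 then (if j = 0 then b3 else if j = 1 then b4 else b5)
  else (if j = 0 then b6 else if j = 1 then b7 else b8)

def mk6 (w0 w1 w2 w3 w4 w5 : Bool) : ℕ → Bool := fun i =>
  if i = 0 then w0 else if i = 1 then w1 else if i = 2 then w2
  else if i = 3 then w3 else if i = 4 then w4 else if i = 5 then w5 else false

def g7 (B : ℕ → ℕ → Bool) (w : ℕ → Bool) (i j : ℕ) : Bool :=
  if j = 6 then (decide (i < 6) && w i) else badj B i j

def symB (g : ℕ → ℕ → Bool) (i j : ℕ) : Bool := decide (i ≠ j) && (g i j || g j i)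

def coadj (f : ℕ → ℕ → Bool) (i j : ℕ) : Bool := decide (i ≠ j) && !f i j

def FG (n : ℕ) (g : ℕ → ℕ → Bool) : SimpleGraph (Fin n) :=
  SimpleGraph.fromRel (fun i j => g i.val j.val = true)

instance (n g) : DecidableRel (FG n g).Adj := by unfold FG; infer_instance

lemma FG_adj (n : ℕ) (g : ℕ → ℕ → Bool) (i j : Fin n) :
    (FG n g).Adj i j ↔ symB g i.val j.val = true := by
  rw [FG, SimpleGraph.fromRel_adj]
  simp [symB, Fin.ext_iff]

lemma FG_compl_adj (n : ℕ) (g : ℕ → ℕ → Bool) (i j : Fin n) :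
    (FG n g)ᶜ.Adj i j ↔ coadj (symB g) i.val j.val = true := by
  rw [SimpleGraph.compl_adj, FG_adj]
  simp [coadj, Fin.ext_iff]

/-! ### Transfer along embeddings -/

lemma clawFree_of_emb {A B : Type*} {G : SimpleGraph A} {H : SimpleGraph B}
    (f : G ↪g H) (h : ClawFree H) : ClawFree G :=
  ⟨fun c => h.false (f.comp c)⟩

def embCompl {A B : Type*} {G : SimpleGraph A} {H : SimpleGraph B} (f : G ↪g H) :
    Gᶜ ↪g Hᶜ :=
  ⟨f.toEmbedding, by
    intro x y
    simp only [SimpleGraph.compl_adj]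
    exact and_congr f.injective.ne_iff (not_congr f.map_rel_iff)⟩

lemma transfer {V : Type*} (U : SimpleGraph V) (hU : ClawFree U) (hUc : ClawFree Uᶜ)
    {n : ℕ} (g : ℕ → ℕ → Bool) (e : Fin n → V) (hinj : Function.Injective e)
    (hadj : ∀ i j : Fin n, U.Adj (e i) (e j) ↔ (FG n g).Adj i j) :
    hasClawB (symB g) n = false ∧ hasClawB (coadj (symB g)) n = false := by
  have emb : FG n g ↪g U := ⟨⟨e, hinj⟩, hadj _ _⟩
  have h1 : ClawFree (FG n g) := clawFree_of_emb emb hU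
  have h2 : ClawFree (FG n g)ᶜ := clawFree_of_emb (embCompl emb) hUc
  constructor
  · rw [← Bool.not_eq_true]
    intro hcl
    exact (hasClaw_iff_not_clawFree _).1 ((hasClawB_iff _ _ (FG_adj n g)).2 hcl) h1
  · rw [← Bool.not_eq_true]
    intro hcl
    exact (hasClaw_iff_not_clawFree _).1 ((hasClawB_iff _ _ (FG_compl_adj n g)).2 hcl) h2

set_option maxRecDepth 100000 in
set_option synthInstance.maxSize 5000 in
set_option maxHeartbeats 4000000 in
theorem S1 : ∀ (b0 b1 b2 b3 b4 b5 b6 b7 b8 : Bool),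
    hasClawB (symB (badj (mk9 b0 b1 b2 b3 b4 b5 b6 b7 b8))) 6 = false →
    hasClawB (coadj (symB (badj (mk9 b0 b1 b2 b3 b4 b5 b6 b7 b8)))) 6 = false →
    ((b0 = false ∧ b1 = false ∧ b2 = true ∧ b3 = false ∧ b4 = true ∧ b5 = false ∧ b6 = true ∧ b7 = false ∧ b8 = false) ∨
     (b0 = false ∧ b1 = true ∧ b2 = false ∧ b3 = false ∧ b4 = false ∧ b5 = true ∧ b6 = true ∧ b7 = false ∧ b8 = false) ∨
     (b0 = false ∧ b1 = false ∧ b2 = true ∧ b3 = true ∧ b4 = false ∧ b5 = false ∧ b6 = false ∧ b7 = true ∧ b8 = false) ∨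
     (b0 = true ∧ b1 = false ∧ b2 = false ∧ b3 = false ∧ b4 = false ∧ b5 = true ∧ b6 = false ∧ b7 = true ∧ b8 = false) ∨
     (b0 = false ∧ b1 = true ∧ b2 = true ∧ b3 = true ∧ b4 = false ∧ b5 = true ∧ b6 = true ∧ b7 = true ∧ b8 = false) ∨
     (b0 = true ∧ b1 = false ∧ b2 = true ∧ b3 = false ∧ b4 = true ∧ b5 = true ∧ b6 = true ∧ b7 = true ∧ b8 = false) ∨
     (b0 = false ∧ b1 = true ∧ b2 = false ∧ b3 = true ∧ b4 = false ∧ b5 = false ∧ b6 = false ∧ b7 = false ∧ b8 = true) ∨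
     (b0 = true ∧ b1 = false ∧ b2 = false ∧ b3 = false ∧ b4 = true ∧ b5 = false ∧ b6 = false ∧ b7 = false ∧ b8 = true) ∨
     (b0 = false ∧ b1 = true ∧ b2 = true ∧ b3 = true ∧ b4 = true ∧ b5 = false ∧ b6 = true ∧ b7 = false ∧ b8 = true) ∨
     (b0 = true ∧ b1 = true ∧ b2 = false ∧ b3 = false ∧ b4 = true ∧ b5 = true ∧ b6 = true ∧ b7 = false ∧ b8 = true) ∨
     (b0 = true ∧ b1 = false ∧ b2 = true ∧ b3 = true ∧ b4 = true ∧ b5 = false ∧ b6 = false ∧ b7 = true ∧ b8 = true) ∨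
     (b0 = true ∧ b1 = true ∧ b2 = false ∧ b3 = true ∧ b4 = false ∧ b5 = true ∧ b6 = false ∧ b7 = true ∧ b8 = true)) := by
  intro b0 b1 b2 b3 b4 b5 b6 b7 b8
  cases b0 <;> cases b1 <;> cases b2 <;> cases b3 <;> cases b4 <;>
    cases b5 <;> cases b6 <;> cases b7 <;> cases b8 <;> decide

set_option maxRecDepth 100000 in
theorem S2_0 : ∀ (w0 w1 w2 w3 w4 w5 : Bool),
    hasClawB (symB (g7 (mk9 false false true false true false true false false) (mk6 w0 w1 w2 w3 w4 w5))) 7 = true ∨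
    hasClawB (coadj (symB (g7 (mk9 false false true false true false true false false) (mk6 w0 w1 w2 w3 w4 w5)))) 7 = true := by
  intro w0 w1 w2 w3 w4 w5
  cases w0 <;> cases w1 <;> cases w2 <;> cases w3 <;> cases w4 <;> cases w5 <;>
    first
      | exact Or.inl (by decide)
      | exact Or.inr (by decide)

lemma iso_0_aux : ∀ a b : Fin 6,
    (A6ᶜ).Adj ((![3, 4, 5, 2, 1, 0] : Fin 6 → Fin 6) a) ((![3, 4, 5, 2, 1, 0] : Fin 6 → Fin 6) b) ↔
      (FG 6 (badj (mk9 false false true false true false true false false))).Adj a b := by decide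

def iso_0 : FG 6 (badj (mk9 false false true false true false true false false)) ≃g A6ᶜ where
  toFun := ![3, 4, 5, 2, 1, 0]
  invFun := ![5, 4, 3, 0, 1, 2]
  left_inv := by intro x; fin_cases x <;> rfl
  right_inv := by intro x; fin_cases x <;> rfl
  map_rel_iff' := iso_0_aux _ _

set_option maxRecDepth 100000 in
theorem S2_1 : ∀ (w0 w1 w2 w3 w4 w5 : Bool),
    hasClawB (symB (g7 (mk9 false true false false false true true false false) (mk6 w0 w1 w2 w3 w4 w5))) 7 = true ∨
    hasClawB (coadj (symB (g7 (mk9 false true false false false true true false false) (mk6 w0 w1 w2 w3 w4 w5)))) 7 = true := by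
  intro w0 w1 w2 w3 w4 w5
  cases w0 <;> cases w1 <;> cases w2 <;> cases w3 <;> cases w4 <;> cases w5 <;>
    first
      | exact Or.inl (by decide)
      | exact Or.inr (by decide)

lemma iso_1_aux : ∀ a b : Fin 6,
    (A6ᶜ).Adj ((![3, 4, 5, 2, 0, 1] : Fin 6 → Fin 6) a) ((![3, 4, 5, 2, 0, 1] : Fin 6 → Fin 6) b) ↔
      (FG 6 (badj (mk9 false true false false false true true false false))).Adj a b := by decide

def iso_1 : FG 6 (badj (mk9 false true false false false true true false false)) ≃g A6ᶜ where
  toFun := ![3, 4, 5, 2, 0, 1]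
  invFun := ![4, 5, 3, 0, 1, 2]
  left_inv := by intro x; fin_cases x <;> rfl
  right_inv := by intro x; fin_cases x <;> rfl
  map_rel_iff' := iso_1_aux _ _

set_option maxRecDepth 100000 in
theorem S2_2 : ∀ (w0 w1 w2 w3 w4 w5 : Bool),
    hasClawB (symB (g7 (mk9 false false true true false false false true false) (mk6 w0 w1 w2 w3 w4 w5))) 7 = true ∨
    hasClawB (coadj (symB (g7 (mk9 false false true true false false false true false) (mk6 w0 w1 w2 w3 w4 w5)))) 7 = true := by
  intro w0 w1 w2 w3 w4 w5
  cases w0 <;> cases w1 <;> cases w2 <;> cases w3 <;> cases w4 <;> cases w5 <;>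
    first
      | exact Or.inl (by decide)
      | exact Or.inr (by decide)

lemma iso_2_aux : ∀ a b : Fin 6,
    (A6ᶜ).Adj ((![3, 4, 5, 1, 2, 0] : Fin 6 → Fin 6) a) ((![3, 4, 5, 1, 2, 0] : Fin 6 → Fin 6) b) ↔
      (FG 6 (badj (mk9 false false true true false false false true false))).Adj a b := by decide

def iso_2 : FG 6 (badj (mk9 false false true true false false false true false)) ≃g A6ᶜ where
  toFun := ![3, 4, 5, 1, 2, 0]
  invFun := ![5, 3, 4, 0, 1, 2]
  left_inv := by intro x; fin_cases x <;> rfl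
  right_inv := by intro x; fin_cases x <;> rfl
  map_rel_iff' := iso_2_aux _ _

set_option maxRecDepth 100000 in
theorem S2_3 : ∀ (w0 w1 w2 w3 w4 w5 : Bool),
    hasClawB (symB (g7 (mk9 true false false false false true false true false) (mk6 w0 w1 w2 w3 w4 w5))) 7 = true ∨
    hasClawB (coadj (symB (g7 (mk9 true false false false false true false true false) (mk6 w0 w1 w2 w3 w4 w5)))) 7 = true := by
  intro w0 w1 w2 w3 w4 w5
  cases w0 <;> cases w1 <;> cases w2 <;> cases w3 <;> cases w4 <;> cases w5 <;>
    first
      | exact Or.inl (by decide)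
      | exact Or.inr (by decide)

lemma iso_3_aux : ∀ a b : Fin 6,
    (A6ᶜ).Adj ((![3, 4, 5, 0, 2, 1] : Fin 6 → Fin 6) a) ((![3, 4, 5, 0, 2, 1] : Fin 6 → Fin 6) b) ↔
      (FG 6 (badj (mk9 true false false false false true false true false))).Adj a b := by decide

def iso_3 : FG 6 (badj (mk9 true false false false false true false true false)) ≃g A6ᶜ where
  toFun := ![3, 4, 5, 0, 2, 1]
  invFun := ![3, 5, 4, 0, 1, 2]
  left_inv := by intro x; fin_cases x <;> rfl
  right_inv := by intro x; fin_cases x <;> rfl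
  map_rel_iff' := iso_3_aux _ _

set_option maxRecDepth 100000 in
theorem S2_4 : ∀ (w0 w1 w2 w3 w4 w5 : Bool),
    hasClawB (symB (g7 (mk9 false true true true false true true true false) (mk6 w0 w1 w2 w3 w4 w5))) 7 = true ∨
    hasClawB (coadj (symB (g7 (mk9 false true true true false true true true false) (mk6 w0 w1 w2 w3 w4 w5)))) 7 = true := by
  intro w0 w1 w2 w3 w4 w5
  cases w0 <;> cases w1 <;> cases w2 <;> cases w3 <;> cases w4 <;> cases w5 <;>
    first
      | exact Or.inl (by decide)
      | exact Or.inr (by decide)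

lemma iso_4_aux : ∀ a b : Fin 6,
    (A6).Adj ((![0, 1, 2, 3, 4, 5] : Fin 6 → Fin 6) a) ((![0, 1, 2, 3, 4, 5] : Fin 6 → Fin 6) b) ↔
      (FG 6 (badj (mk9 false true true true false true true true false))).Adj a b := by decide

def iso_4 : FG 6 (badj (mk9 false true true true false true true true false)) ≃g A6 where
  toFun := ![0, 1, 2, 3, 4, 5]
  invFun := ![0, 1, 2, 3, 4, 5]
  left_inv := by intro x; fin_cases x <;> rfl
  right_inv := by intro x; fin_cases x <;> rfl
  map_rel_iff' := iso_4_aux _ _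

set_option maxRecDepth 100000 in
theorem S2_5 : ∀ (w0 w1 w2 w3 w4 w5 : Bool),
    hasClawB (symB (g7 (mk9 true false true false true true true true false) (mk6 w0 w1 w2 w3 w4 w5))) 7 = true ∨
    hasClawB (coadj (symB (g7 (mk9 true false true false true true true true false) (mk6 w0 w1 w2 w3 w4 w5)))) 7 = true := by
  intro w0 w1 w2 w3 w4 w5
  cases w0 <;> cases w1 <;> cases w2 <;> cases w3 <;> cases w4 <;> cases w5 <;>
    first
      | exact Or.inl (by decide)
      | exact Or.inr (by decide)

lemma iso_5_aux : ∀ a b : Fin 6,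
    (A6).Adj ((![0, 1, 2, 4, 3, 5] : Fin 6 → Fin 6) a) ((![0, 1, 2, 4, 3, 5] : Fin 6 → Fin 6) b) ↔
      (FG 6 (badj (mk9 true false true false true true true true false))).Adj a b := by decide

def iso_5 : FG 6 (badj (mk9 true false true false true true true true false)) ≃g A6 where
  toFun := ![0, 1, 2, 4, 3, 5]
  invFun := ![0, 1, 2, 4, 3, 5]
  left_inv := by intro x; fin_cases x <;> rfl
  right_inv := by intro x; fin_cases x <;> rfl
  map_rel_iff' := iso_5_aux _ _

set_option maxRecDepth 100000 in
theorem S2_6 : ∀ (w0 w1 w2 w3 w4 w5 : Bool),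
    hasClawB (symB (g7 (mk9 false true false true false false false false true) (mk6 w0 w1 w2 w3 w4 w5))) 7 = true ∨
    hasClawB (coadj (symB (g7 (mk9 false true false true false false false false true) (mk6 w0 w1 w2 w3 w4 w5)))) 7 = true := by
  intro w0 w1 w2 w3 w4 w5
  cases w0 <;> cases w1 <;> cases w2 <;> cases w3 <;> cases w4 <;> cases w5 <;>
    first
      | exact Or.inl (by decide)
      | exact Or.inr (by decide)

lemma iso_6_aux : ∀ a b : Fin 6,
    (A6ᶜ).Adj ((![3, 4, 5, 1, 0, 2] : Fin 6 → Fin 6) a) ((![3, 4, 5, 1, 0, 2] : Fin 6 → Fin 6) b) ↔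
      (FG 6 (badj (mk9 false true false true false false false false true))).Adj a b := by decide

def iso_6 : FG 6 (badj (mk9 false true false true false false false false true)) ≃g A6ᶜ where
  toFun := ![3, 4, 5, 1, 0, 2]
  invFun := ![4, 3, 5, 0, 1, 2]
  left_inv := by intro x; fin_cases x <;> rfl
  right_inv := by intro x; fin_cases x <;> rfl
  map_rel_iff' := iso_6_aux _ _

set_option maxRecDepth 100000 in
theorem S2_7 : ∀ (w0 w1 w2 w3 w4 w5 : Bool),
    hasClawB (symB (g7 (mk9 true false false false true false false false true) (mk6 w0 w1 w2 w3 w4 w5))) 7 = true ∨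
    hasClawB (coadj (symB (g7 (mk9 true false false false true false false false true) (mk6 w0 w1 w2 w3 w4 w5)))) 7 = true := by
  intro w0 w1 w2 w3 w4 w5
  cases w0 <;> cases w1 <;> cases w2 <;> cases w3 <;> cases w4 <;> cases w5 <;>
    first
      | exact Or.inl (by decide)
      | exact Or.inr (by decide)

lemma iso_7_aux : ∀ a b : Fin 6,
    (A6ᶜ).Adj ((![3, 4, 5, 0, 1, 2] : Fin 6 → Fin 6) a) ((![3, 4, 5, 0, 1, 2] : Fin 6 → Fin 6) b) ↔
      (FG 6 (badj (mk9 true false false false true false false false true))).Adj a b := by decide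

def iso_7 : FG 6 (badj (mk9 true false false false true false false false true)) ≃g A6ᶜ where
  toFun := ![3, 4, 5, 0, 1, 2]
  invFun := ![3, 4, 5, 0, 1, 2]
  left_inv := by intro x; fin_cases x <;> rfl
  right_inv := by intro x; fin_cases x <;> rfl
  map_rel_iff' := iso_7_aux _ _

set_option maxRecDepth 100000 in
theorem S2_8 : ∀ (w0 w1 w2 w3 w4 w5 : Bool),
    hasClawB (symB (g7 (mk9 false true true true true false true false true) (mk6 w0 w1 w2 w3 w4 w5))) 7 = true ∨
    hasClawB (coadj (symB (g7 (mk9 false true true true true false true false true) (mk6 w0 w1 w2 w3 w4 w5)))) 7 = true := by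
  intro w0 w1 w2 w3 w4 w5
  cases w0 <;> cases w1 <;> cases w2 <;> cases w3 <;> cases w4 <;> cases w5 <;>
    first
      | exact Or.inl (by decide)
      | exact Or.inr (by decide)

lemma iso_8_aux : ∀ a b : Fin 6,
    (A6).Adj ((![0, 1, 2, 3, 5, 4] : Fin 6 → Fin 6) a) ((![0, 1, 2, 3, 5, 4] : Fin 6 → Fin 6) b) ↔
      (FG 6 (badj (mk9 false true true true true false true false true))).Adj a b := by decide

def iso_8 : FG 6 (badj (mk9 false true true true true false true false true)) ≃g A6 where
  toFun := ![0, 1, 2, 3, 5, 4]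
  invFun := ![0, 1, 2, 3, 5, 4]
  left_inv := by intro x; fin_cases x <;> rfl
  right_inv := by intro x; fin_cases x <;> rfl
  map_rel_iff' := iso_8_aux _ _

set_option maxRecDepth 100000 in
theorem S2_9 : ∀ (w0 w1 w2 w3 w4 w5 : Bool),
    hasClawB (symB (g7 (mk9 true true false false true true true false true) (mk6 w0 w1 w2 w3 w4 w5))) 7 = true ∨
    hasClawB (coadj (symB (g7 (mk9 true true false false true true true false true) (mk6 w0 w1 w2 w3 w4 w5)))) 7 = true := by
  intro w0 w1 w2 w3 w4 w5
  cases w0 <;> cases w1 <;> cases w2 <;> cases w3 <;> cases w4 <;> cases w5 <;>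
    first
      | exact Or.inl (by decide)
      | exact Or.inr (by decide)

lemma iso_9_aux : ∀ a b : Fin 6,
    (A6).Adj ((![0, 1, 2, 4, 5, 3] : Fin 6 → Fin 6) a) ((![0, 1, 2, 4, 5, 3] : Fin 6 → Fin 6) b) ↔
      (FG 6 (badj (mk9 true true false false true true true false true))).Adj a b := by decide

def iso_9 : FG 6 (badj (mk9 true true false false true true true false true)) ≃g A6 where
  toFun := ![0, 1, 2, 4, 5, 3]
  invFun := ![0, 1, 2, 5, 3, 4]
  left_inv := by intro x; fin_cases x <;> rfl
  right_inv := by intro x; fin_cases x <;> rfl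
  map_rel_iff' := iso_9_aux _ _

set_option maxRecDepth 100000 in
theorem S2_10 : ∀ (w0 w1 w2 w3 w4 w5 : Bool),
    hasClawB (symB (g7 (mk9 true false true true true false false true true) (mk6 w0 w1 w2 w3 w4 w5))) 7 = true ∨
    hasClawB (coadj (symB (g7 (mk9 true false true true true false false true true) (mk6 w0 w1 w2 w3 w4 w5)))) 7 = true := by
  intro w0 w1 w2 w3 w4 w5
  cases w0 <;> cases w1 <;> cases w2 <;> cases w3 <;> cases w4 <;> cases w5 <;>
    first
      | exact Or.inl (by decide)
      | exact Or.inr (by decide)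

lemma iso_10_aux : ∀ a b : Fin 6,
    (A6).Adj ((![0, 1, 2, 5, 3, 4] : Fin 6 → Fin 6) a) ((![0, 1, 2, 5, 3, 4] : Fin 6 → Fin 6) b) ↔
      (FG 6 (badj (mk9 true false true true true false false true true))).Adj a b := by decide

def iso_10 : FG 6 (badj (mk9 true false true true true false false true true)) ≃g A6 where
  toFun := ![0, 1, 2, 5, 3, 4]
  invFun := ![0, 1, 2, 4, 5, 3]
  left_inv := by intro x; fin_cases x <;> rfl
  right_inv := by intro x; fin_cases x <;> rfl
  map_rel_iff' := iso_10_aux _ _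

set_option maxRecDepth 100000 in
theorem S2_11 : ∀ (w0 w1 w2 w3 w4 w5 : Bool),
    hasClawB (symB (g7 (mk9 true true false true false true false true true) (mk6 w0 w1 w2 w3 w4 w5))) 7 = true ∨
    hasClawB (coadj (symB (g7 (mk9 true true false true false true false true true) (mk6 w0 w1 w2 w3 w4 w5)))) 7 = true := by
  intro w0 w1 w2 w3 w4 w5
  cases w0 <;> cases w1 <;> cases w2 <;> cases w3 <;> cases w4 <;> cases w5 <;>
    first
      | exact Or.inl (by decide)
      | exact Or.inr (by decide)

lemma iso_11_aux : ∀ a b : Fin 6,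
    (A6).Adj ((![0, 1, 2, 5, 4, 3] : Fin 6 → Fin 6) a) ((![0, 1, 2, 5, 4, 3] : Fin 6 → Fin 6) b) ↔
      (FG 6 (badj (mk9 true true false true false true false true true))).Adj a b := by decide

def iso_11 : FG 6 (badj (mk9 true true false true false true false true true)) ≃g A6 where
  toFun := ![0, 1, 2, 5, 4, 3]
  invFun := ![0, 1, 2, 5, 4, 3]
  left_inv := by intro x; fin_cases x <;> rfl
  right_inv := by intro x; fin_cases x <;> rfl
  map_rel_iff' := iso_11_aux _ _

set_option maxHeartbeats 2000000 in
/-- If `U` and its complement are claw-free and `U` contains a triangle and a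
    3-element independent set that are vertex-disjoint, then `U` is isomorphic
    to `A6` or to the complement of `A6`. -/
theorem clawfree_disjoint_triangle_indep {V : Type*} [Fintype V] (U : SimpleGraph V)
    (h : ClawFree U ∧ ClawFree Uᶜ)
    (htri : ∃ s : Finset V, s.card = 3 ∧ U.IsClique (s : Set V) ∧
      ∃ t : Finset V, t.card = 3 ∧ Uᶜ.IsClique (t : Set V) ∧ Disjoint s t) :
    Nonempty (U ≃g A6) ∨ Nonempty (U ≃g A6ᶜ) := by
  classical
  obtain ⟨hU, hUc⟩ := h
  obtain ⟨s, hs3, hsc, t, ht3, htc, hdisj⟩ := htri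
  rw [Finset.card_eq_three] at hs3 ht3
  obtain ⟨a, b, c, hab, hac, hbc, rfl⟩ := hs3
  obtain ⟨a', b', c', hab', hac', hbc', rfl⟩ := ht3
  have Aab : U.Adj a b := hsc (by simp) (by simp) hab
  have Aac : U.Adj a c := hsc (by simp) (by simp) hac
  have Abc : U.Adj b c := hsc (by simp) (by simp) hbc
  have Nab : ¬U.Adj a' b' := ((SimpleGraph.compl_adj _ _ _).1 (htc (by simp) (by simp) hab')).2
  have Nac : ¬U.Adj a' c' := ((SimpleGraph.compl_adj _ _ _).1 (htc (by simp) (by simp) hac')).2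
  have Nbc : ¬U.Adj b' c' := ((SimpleGraph.compl_adj _ _ _).1 (htc (by simp) (by simp) hbc')).2
  have Nba : ¬U.Adj b' a' := fun hx => Nab hx.symm
  have Nca : ¬U.Adj c' a' := fun hx => Nac hx.symm
  have Ncb : ¬U.Adj c' b' := fun hx => Nbc hx.symm
  have dis : ∀ x ∈ ({a, b, c} : Finset V), ∀ y ∈ ({a', b', c'} : Finset V), x ≠ y := by
    intro x hx y hy hxy
    exact Finset.disjoint_left.1 hdisj hx (hxy ▸ hy)
  have daap : a ≠ a' := dis a (by simp) a' (by simp)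
  have dabp : a ≠ b' := dis a (by simp) b' (by simp)
  have dacp : a ≠ c' := dis a (by simp) c' (by simp)
  have dbap : b ≠ a' := dis b (by simp) a' (by simp)
  have dbbp : b ≠ b' := dis b (by simp) b' (by simp)
  have dbcp : b ≠ c' := dis b (by simp) c' (by simp)
  have dcap : c ≠ a' := dis c (by simp) a' (by simp)
  have dcbp : c ≠ b' := dis c (by simp) b' (by simp)
  have dccp : c ≠ c' := dis c (by simp) c' (by simp)
  have ne01 : a ≠ b := hab
  have ne10 : b ≠ a := hab.symm
  have ne02 : a ≠ c := hac
  have ne20 : c ≠ a := hac.symm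
  have ne03 : a ≠ a' := daap
  have ne30 : a' ≠ a := daap.symm
  have ne04 : a ≠ b' := dabp
  have ne40 : b' ≠ a := dabp.symm
  have ne05 : a ≠ c' := dacp
  have ne50 : c' ≠ a := dacp.symm
  have ne12 : b ≠ c := hbc
  have ne21 : c ≠ b := hbc.symm
  have ne13 : b ≠ a' := dbap
  have ne31 : a' ≠ b := dbap.symm
  have ne14 : b ≠ b' := dbbp
  have ne41 : b' ≠ b := dbbp.symm
  have ne15 : b ≠ c' := dbcp
  have ne51 : c' ≠ b := dbcp.symm
  have ne23 : c ≠ a' := dcap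
  have ne32 : a' ≠ c := dcap.symm
  have ne24 : c ≠ b' := dcbp
  have ne42 : b' ≠ c := dcbp.symm
  have ne25 : c ≠ c' := dccp
  have ne52 : c' ≠ c := dccp.symm
  have ne34 : a' ≠ b' := hab'
  have ne43 : b' ≠ a' := hab'.symm
  have ne35 : a' ≠ c' := hac'
  have ne53 : c' ≠ a' := hac'.symm
  have ne45 : b' ≠ c' := hbc'
  have ne54 : c' ≠ b' := hbc'.symm
  have hinj6 : Function.Injective (![a, b, c, a', b', c'] : Fin 6 → V) := by
    intro i j hij
    fin_cases i <;> fin_cases j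
    · rfl
    · exact absurd (by simpa using hij) ne01
    · exact absurd (by simpa using hij) ne02
    · exact absurd (by simpa using hij) ne03
    · exact absurd (by simpa using hij) ne04
    · exact absurd (by simpa using hij) ne05
    · exact absurd (by simpa using hij) ne10
    · rfl
    · exact absurd (by simpa using hij) ne12
    · exact absurd (by simpa using hij) ne13
    · exact absurd (by simpa using hij) ne14
    · exact absurd (by simpa using hij) ne15
    · exact absurd (by simpa using hij) ne20
    · exact absurd (by simpa using hij) ne21
    · rfl
    · exact absurd (by simpa using hij) ne23
    · exact absurd (by simpa using hij) ne24
    · exact absurd (by simpa using hij) ne25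
    · exact absurd (by simpa using hij) ne30
    · exact absurd (by simpa using hij) ne31
    · exact absurd (by simpa using hij) ne32
    · rfl
    · exact absurd (by simpa using hij) ne34
    · exact absurd (by simpa using hij) ne35
    · exact absurd (by simpa using hij) ne40
    · exact absurd (by simpa using hij) ne41
    · exact absurd (by simpa using hij) ne42
    · exact absurd (by simpa using hij) ne43
    · rfl
    · exact absurd (by simpa using hij) ne45
    · exact absurd (by simpa using hij) ne50
    · exact absurd (by simpa using hij) ne51
    · exact absurd (by simpa using hij) ne52
    · exact absurd (by simpa using hij) ne53
    · exact absurd (by simpa using hij) ne54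
    · rfl
  have fv60 : ((0 : Fin 6)).val = 0 := rfl
  have fv61 : ((1 : Fin 6)).val = 1 := rfl
  have fv62 : ((2 : Fin 6)).val = 2 := rfl
  have fv63 : ((3 : Fin 6)).val = 3 := rfl
  have fv64 : ((4 : Fin 6)).val = 4 := rfl
  have fv65 : ((5 : Fin 6)).val = 5 := rfl
  have m60 : (![a, b, c, a', b', c'] : Fin 6 → V) 0 = a := rfl
  have m61 : (![a, b, c, a', b', c'] : Fin 6 → V) 1 = b := rfl
  have m62 : (![a, b, c, a', b', c'] : Fin 6 → V) 2 = c := rfl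
  have m63 : (![a, b, c, a', b', c'] : Fin 6 → V) 3 = a' := rfl
  have m64 : (![a, b, c, a', b', c'] : Fin 6 → V) 4 = b' := rfl
  have m65 : (![a, b, c, a', b', c'] : Fin 6 → V) 5 = c' := rfl
  have hadj6 : ∀ i j : Fin 6, U.Adj ((![a, b, c, a', b', c'] : Fin 6 → V) i)
      ((![a, b, c, a', b', c'] : Fin 6 → V) j) ↔
      (FG 6 (badj (mk9 (decide (U.Adj a a')) (decide (U.Adj a b')) (decide (U.Adj a c')) (decide (U.Adj b a')) (decide (U.Adj b b')) (decide (U.Adj b c')) (decide (U.Adj c a')) (decide (U.Adj c b')) (decide (U.Adj c c'))))).Adj i j := by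
    intro i j
    fin_cases i <;> fin_cases j <;>
      simp [FG, SimpleGraph.fromRel_adj, badj, mk9, m60, m61, m62, m63, m64, m65, fv60, fv61, fv62, fv63, fv64, fv65, Aab, Aac, Abc, Aab.symm, Aac.symm, Abc.symm, Nab, Nac, Nbc, Nba, Nca, Ncb, SimpleGraph.irrefl] <;>
      first
        | exact U.adj_comm _ _
        | rfl
  have hB6 := transfer U hU hUc (badj (mk9 (decide (U.Adj a a')) (decide (U.Adj a b')) (decide (U.Adj a c')) (decide (U.Adj b a')) (decide (U.Adj b b')) (decide (U.Adj b c')) (decide (U.Adj c a')) (decide (U.Adj c b')) (decide (U.Adj c c')))) _ hinj6 hadj6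
  have D := S1 (decide (U.Adj a a')) (decide (U.Adj a b')) (decide (U.Adj a c')) (decide (U.Adj b a')) (decide (U.Adj b b')) (decide (U.Adj b c')) (decide (U.Adj c a')) (decide (U.Adj c b')) (decide (U.Adj c c')) hB6.1 hB6.2
  have hsurj : ∀ y : V, ∃ i : Fin 6, (![a, b, c, a', b', c'] : Fin 6 → V) i = y := by
    by_contra hns
    push_neg at hns
    obtain ⟨v, hv⟩ := hns
    have nv0 : a ≠ v := by simpa using hv 0
    have nv1 : b ≠ v := by simpa using hv 1
    have nv2 : c ≠ v := by simpa using hv 2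
    have nv3 : a' ≠ v := by simpa using hv 3
    have nv4 : b' ≠ v := by simpa using hv 4
    have nv5 : c' ≠ v := by simpa using hv 5
    have mv0 := nv0.symm
    have mv1 := nv1.symm
    have mv2 := nv2.symm
    have mv3 := nv3.symm
    have mv4 := nv4.symm
    have mv5 := nv5.symm
    have hinj7 : Function.Injective (![a, b, c, a', b', c', v] : Fin 7 → V) := by
      intro i j hij
      fin_cases i <;> fin_cases j
      · rfl
      · exact absurd (by simpa using hij) ne01
      · exact absurd (by simpa using hij) ne02
      · exact absurd (by simpa using hij) ne03
      · exact absurd (by simpa using hij) ne04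
      · exact absurd (by simpa using hij) ne05
      · exact absurd (by simpa using hij) nv0
      · exact absurd (by simpa using hij) ne10
      · rfl
      · exact absurd (by simpa using hij) ne12
      · exact absurd (by simpa using hij) ne13
      · exact absurd (by simpa using hij) ne14
      · exact absurd (by simpa using hij) ne15
      · exact absurd (by simpa using hij) nv1
      · exact absurd (by simpa using hij) ne20
      · exact absurd (by simpa using hij) ne21
      · rfl
      · exact absurd (by simpa using hij) ne23
      · exact absurd (by simpa using hij) ne24
      · exact absurd (by simpa using hij) ne25
      · exact absurd (by simpa using hij) nv2
      · exact absurd (by simpa using hij) ne30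
      · exact absurd (by simpa using hij) ne31
      · exact absurd (by simpa using hij) ne32
      · rfl
      · exact absurd (by simpa using hij) ne34
      · exact absurd (by simpa using hij) ne35
      · exact absurd (by simpa using hij) nv3
      · exact absurd (by simpa using hij) ne40
      · exact absurd (by simpa using hij) ne41
      · exact absurd (by simpa using hij) ne42
      · exact absurd (by simpa using hij) ne43
      · rfl
      · exact absurd (by simpa using hij) ne45
      · exact absurd (by simpa using hij) nv4
      · exact absurd (by simpa using hij) ne50
      · exact absurd (by simpa using hij) ne51
      · exact absurd (by simpa using hij) ne52
      · exact absurd (by simpa using hij) ne53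
      · exact absurd (by simpa using hij) ne54
      · rfl
      · exact absurd (by simpa using hij) nv5
      · exact absurd (by simpa using hij) mv0
      · exact absurd (by simpa using hij) mv1
      · exact absurd (by simpa using hij) mv2
      · exact absurd (by simpa using hij) mv3
      · exact absurd (by simpa using hij) mv4
      · exact absurd (by simpa using hij) mv5
      · rfl
    have fv70 : ((0 : Fin 7)).val = 0 := rfl
    have fv71 : ((1 : Fin 7)).val = 1 := rfl
    have fv72 : ((2 : Fin 7)).val = 2 := rfl
    have fv73 : ((3 : Fin 7)).val = 3 := rfl
    have fv74 : ((4 : Fin 7)).val = 4 := rfl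
    have fv75 : ((5 : Fin 7)).val = 5 := rfl
    have fv76 : ((6 : Fin 7)).val = 6 := rfl
    have m70 : (![a, b, c, a', b', c', v] : Fin 7 → V) 0 = a := rfl
    have m71 : (![a, b, c, a', b', c', v] : Fin 7 → V) 1 = b := rfl
    have m72 : (![a, b, c, a', b', c', v] : Fin 7 → V) 2 = c := rfl
    have m73 : (![a, b, c, a', b', c', v] : Fin 7 → V) 3 = a' := rfl
    have m74 : (![a, b, c, a', b', c', v] : Fin 7 → V) 4 = b' := rfl
    have m75 : (![a, b, c, a', b', c', v] : Fin 7 → V) 5 = c' := rfl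
    have m76 : (![a, b, c, a', b', c', v] : Fin 7 → V) 6 = v := rfl
    have hadj7 : ∀ i j : Fin 7, U.Adj ((![a, b, c, a', b', c', v] : Fin 7 → V) i)
        ((![a, b, c, a', b', c', v] : Fin 7 → V) j) ↔
        (FG 7 (g7 (mk9 (decide (U.Adj a a')) (decide (U.Adj a b')) (decide (U.Adj a c')) (decide (U.Adj b a')) (decide (U.Adj b b')) (decide (U.Adj b c')) (decide (U.Adj c a')) (decide (U.Adj c b')) (decide (U.Adj c c'))) (mk6 (decide (U.Adj a v)) (decide (U.Adj b v)) (decide (U.Adj c v)) (decide (U.Adj a' v)) (decide (U.Adj b' v)) (decide (U.Adj c' v))))).Adj i j := by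
      intro i j
      fin_cases i <;> fin_cases j <;>
        simp [FG, SimpleGraph.fromRel_adj, badj, mk9, mk6, g7, m70, m71, m72, m73, m74, m75, m76, fv70, fv71, fv72, fv73, fv74, fv75, fv76, Aab, Aac, Abc, Aab.symm, Aac.symm, Abc.symm, Nab, Nac, Nbc, Nba, Nca, Ncb,
          SimpleGraph.irrefl] <;>
        first
          | exact U.adj_comm _ _
          | rfl
    have hB7 := transfer U hU hUc (g7 (mk9 (decide (U.Adj a a')) (decide (U.Adj a b')) (decide (U.Adj a c')) (decide (U.Adj b a')) (decide (U.Adj b b')) (decide (U.Adj b c')) (decide (U.Adj c a')) (decide (U.Adj c b')) (decide (U.Adj c c'))) (mk6 (decide (U.Adj a v)) (decide (U.Adj b v)) (decide (U.Adj c v)) (decide (U.Adj a' v)) (decide (U.Adj b' v)) (decide (U.Adj c' v)))) _ hinj7 hadj7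
    rcases D with ⟨E0,E1,E2,E3,E4,E5,E6,E7,E8⟩|⟨E0,E1,E2,E3,E4,E5,E6,E7,E8⟩|⟨E0,E1,E2,E3,E4,E5,E6,E7,E8⟩|⟨E0,E1,E2,E3,E4,E5,E6,E7,E8⟩|⟨E0,E1,E2,E3,E4,E5,E6,E7,E8⟩|⟨E0,E1,E2,E3,E4,E5,E6,E7,E8⟩|⟨E0,E1,E2,E3,E4,E5,E6,E7,E8⟩|⟨E0,E1,E2,E3,E4,E5,E6,E7,E8⟩|⟨E0,E1,E2,E3,E4,E5,E6,E7,E8⟩|⟨E0,E1,E2,E3,E4,E5,E6,E7,E8⟩|⟨E0,E1,E2,E3,E4,E5,E6,E7,E8⟩|⟨E0,E1,E2,E3,E4,E5,E6,E7,E8⟩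
    · rw [E0, E1, E2, E3, E4, E5, E6, E7, E8] at hB7
      rcases S2_0 (decide (U.Adj a v)) (decide (U.Adj b v)) (decide (U.Adj c v))
          (decide (U.Adj a' v)) (decide (U.Adj b' v)) (decide (U.Adj c' v)) with hk | hk
      · exact Bool.noConfusion (hk.symm.trans hB7.1)
      · exact Bool.noConfusion (hk.symm.trans hB7.2)
    · rw [E0, E1, E2, E3, E4, E5, E6, E7, E8] at hB7
      rcases S2_1 (decide (U.Adj a v)) (decide (U.Adj b v)) (decide (U.Adj c v))
          (decide (U.Adj a' v)) (decide (U.Adj b' v)) (decide (U.Adj c' v)) with hk | hk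
      · exact Bool.noConfusion (hk.symm.trans hB7.1)
      · exact Bool.noConfusion (hk.symm.trans hB7.2)
    · rw [E0, E1, E2, E3, E4, E5, E6, E7, E8] at hB7
      rcases S2_2 (decide (U.Adj a v)) (decide (U.Adj b v)) (decide (U.Adj c v))
          (decide (U.Adj a' v)) (decide (U.Adj b' v)) (decide (U.Adj c' v)) with hk | hk
      · exact Bool.noConfusion (hk.symm.trans hB7.1)
      · exact Bool.noConfusion (hk.symm.trans hB7.2)
    · rw [E0, E1, E2, E3, E4, E5, E6, E7, E8] at hB7
      rcases S2_3 (decide (U.Adj a v)) (decide (U.Adj b v)) (decide (U.Adj c v))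
          (decide (U.Adj a' v)) (decide (U.Adj b' v)) (decide (U.Adj c' v)) with hk | hk
      · exact Bool.noConfusion (hk.symm.trans hB7.1)
      · exact Bool.noConfusion (hk.symm.trans hB7.2)
    · rw [E0, E1, E2, E3, E4, E5, E6, E7, E8] at hB7
      rcases S2_4 (decide (U.Adj a v)) (decide (U.Adj b v)) (decide (U.Adj c v))
          (decide (U.Adj a' v)) (decide (U.Adj b' v)) (decide (U.Adj c' v)) with hk | hk
      · exact Bool.noConfusion (hk.symm.trans hB7.1)
      · exact Bool.noConfusion (hk.symm.trans hB7.2)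
    · rw [E0, E1, E2, E3, E4, E5, E6, E7, E8] at hB7
      rcases S2_5 (decide (U.Adj a v)) (decide (U.Adj b v)) (decide (U.Adj c v))
          (decide (U.Adj a' v)) (decide (U.Adj b' v)) (decide (U.Adj c' v)) with hk | hk
      · exact Bool.noConfusion (hk.symm.trans hB7.1)
      · exact Bool.noConfusion (hk.symm.trans hB7.2)
    · rw [E0, E1, E2, E3, E4, E5, E6, E7, E8] at hB7
      rcases S2_6 (decide (U.Adj a v)) (decide (U.Adj b v)) (decide (U.Adj c v))
          (decide (U.Adj a' v)) (decide (U.Adj b' v)) (decide (U.Adj c' v)) with hk | hk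
      · exact Bool.noConfusion (hk.symm.trans hB7.1)
      · exact Bool.noConfusion (hk.symm.trans hB7.2)
    · rw [E0, E1, E2, E3, E4, E5, E6, E7, E8] at hB7
      rcases S2_7 (decide (U.Adj a v)) (decide (U.Adj b v)) (decide (U.Adj c v))
          (decide (U.Adj a' v)) (decide (U.Adj b' v)) (decide (U.Adj c' v)) with hk | hk
      · exact Bool.noConfusion (hk.symm.trans hB7.1)
      · exact Bool.noConfusion (hk.symm.trans hB7.2)
    · rw [E0, E1, E2, E3, E4, E5, E6, E7, E8] at hB7
      rcases S2_8 (decide (U.Adj a v)) (decide (U.Adj b v)) (decide (U.Adj c v))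
          (decide (U.Adj a' v)) (decide (U.Adj b' v)) (decide (U.Adj c' v)) with hk | hk
      · exact Bool.noConfusion (hk.symm.trans hB7.1)
      · exact Bool.noConfusion (hk.symm.trans hB7.2)
    · rw [E0, E1, E2, E3, E4, E5, E6, E7, E8] at hB7
      rcases S2_9 (decide (U.Adj a v)) (decide (U.Adj b v)) (decide (U.Adj c v))
          (decide (U.Adj a' v)) (decide (U.Adj b' v)) (decide (U.Adj c' v)) with hk | hk
      · exact Bool.noConfusion (hk.symm.trans hB7.1)
      · exact Bool.noConfusion (hk.symm.trans hB7.2)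
    · rw [E0, E1, E2, E3, E4, E5, E6, E7, E8] at hB7
      rcases S2_10 (decide (U.Adj a v)) (decide (U.Adj b v)) (decide (U.Adj c v))
          (decide (U.Adj a' v)) (decide (U.Adj b' v)) (decide (U.Adj c' v)) with hk | hk
      · exact Bool.noConfusion (hk.symm.trans hB7.1)
      · exact Bool.noConfusion (hk.symm.trans hB7.2)
    · rw [E0, E1, E2, E3, E4, E5, E6, E7, E8] at hB7
      rcases S2_11 (decide (U.Adj a v)) (decide (U.Adj b v)) (decide (U.Adj c v))
          (decide (U.Adj a' v)) (decide (U.Adj b' v)) (decide (U.Adj c' v)) with hk | hk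
      · exact Bool.noConfusion (hk.symm.trans hB7.1)
      · exact Bool.noConfusion (hk.symm.trans hB7.2)
  have hbij : Function.Bijective (![a, b, c, a', b', c'] : Fin 6 → V) := ⟨hinj6, hsurj⟩
  rcases D with ⟨E0,E1,E2,E3,E4,E5,E6,E7,E8⟩|⟨E0,E1,E2,E3,E4,E5,E6,E7,E8⟩|⟨E0,E1,E2,E3,E4,E5,E6,E7,E8⟩|⟨E0,E1,E2,E3,E4,E5,E6,E7,E8⟩|⟨E0,E1,E2,E3,E4,E5,E6,E7,E8⟩|⟨E0,E1,E2,E3,E4,E5,E6,E7,E8⟩|⟨E0,E1,E2,E3,E4,E5,E6,E7,E8⟩|⟨E0,E1,E2,E3,E4,E5,E6,E7,E8⟩|⟨E0,E1,E2,E3,E4,E5,E6,E7,E8⟩|⟨E0,E1,E2,E3,E4,E5,E6,E7,E8⟩|⟨E0,E1,E2,E3,E4,E5,E6,E7,E8⟩|⟨E0,E1,E2,E3,E4,E5,E6,E7,E8⟩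
  · rw [E0, E1, E2, E3, E4, E5, E6, E7, E8] at hadj6
    exact Or.inr ⟨((⟨Equiv.ofBijective _ hbij, hadj6 _ _⟩ :
      FG 6 (badj (mk9 false false true false true false true false false)) ≃g U)).symm.trans iso_0⟩
  · rw [E0, E1, E2, E3, E4, E5, E6, E7, E8] at hadj6
    exact Or.inr ⟨((⟨Equiv.ofBijective _ hbij, hadj6 _ _⟩ :
      FG 6 (badj (mk9 false true false false false true true false false)) ≃g U)).symm.trans iso_1⟩
  · rw [E0, E1, E2, E3, E4, E5, E6, E7, E8] at hadj6
    exact Or.inr ⟨((⟨Equiv.ofBijective _ hbij, hadj6 _ _⟩ :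
      FG 6 (badj (mk9 false false true true false false false true false)) ≃g U)).symm.trans iso_2⟩
  · rw [E0, E1, E2, E3, E4, E5, E6, E7, E8] at hadj6
    exact Or.inr ⟨((⟨Equiv.ofBijective _ hbij, hadj6 _ _⟩ :
      FG 6 (badj (mk9 true false false false false true false true false)) ≃g U)).symm.trans iso_3⟩
  · rw [E0, E1, E2, E3, E4, E5, E6, E7, E8] at hadj6
    exact Or.inl ⟨((⟨Equiv.ofBijective _ hbij, hadj6 _ _⟩ :
      FG 6 (badj (mk9 false true true true false true true true false)) ≃g U)).symm.trans iso_4⟩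
  · rw [E0, E1, E2, E3, E4, E5, E6, E7, E8] at hadj6
    exact Or.inl ⟨((⟨Equiv.ofBijective _ hbij, hadj6 _ _⟩ :
      FG 6 (badj (mk9 true false true false true true true true false)) ≃g U)).symm.trans iso_5⟩
  · rw [E0, E1, E2, E3, E4, E5, E6, E7, E8] at hadj6
    exact Or.inr ⟨((⟨Equiv.ofBijective _ hbij, hadj6 _ _⟩ :
      FG 6 (badj (mk9 false true false true false false false false true)) ≃g U)).symm.trans iso_6⟩
  · rw [E0, E1, E2, E3, E4, E5, E6, E7, E8] at hadj6
    exact Or.inr ⟨((⟨Equiv.ofBijective _ hbij, hadj6 _ _⟩ :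
      FG 6 (badj (mk9 true false false false true false false false true)) ≃g U)).symm.trans iso_7⟩
  · rw [E0, E1, E2, E3, E4, E5, E6, E7, E8] at hadj6
    exact Or.inl ⟨((⟨Equiv.ofBijective _ hbij, hadj6 _ _⟩ :
      FG 6 (badj (mk9 false true true true true false true false true)) ≃g U)).symm.trans iso_8⟩
  · rw [E0, E1, E2, E3, E4, E5, E6, E7, E8] at hadj6
    exact Or.inl ⟨((⟨Equiv.ofBijective _ hbij, hadj6 _ _⟩ :
      FG 6 (badj (mk9 true true false false true true true false true)) ≃g U)).symm.trans iso_9⟩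
  · rw [E0, E1, E2, E3, E4, E5, E6, E7, E8] at hadj6
    exact Or.inl ⟨((⟨Equiv.ofBijective _ hbij, hadj6 _ _⟩ :
      FG 6 (badj (mk9 true false true true true false false true true)) ≃g U)).symm.trans iso_10⟩
  · rw [E0, E1, E2, E3, E4, E5, E6, E7, E8] at hadj6
    exact Or.inl ⟨((⟨Equiv.ofBijective _ hbij, hadj6 _ _⟩ :
      FG 6 (badj (mk9 true true false true false true false true true)) ≃g U)).symm.trans iso_11⟩
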